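/- There exists a k-to-1 map u : DL_d(q) → i(DL_d^k(q)) that is at bounded distance from the identity, where i(DL_d^k(q)) is the set of vertices of DL_d(q) whose first-tree height lies in kℤ. Consequently, if φ : DL_d^k(q) → DL_d(q) is a bijective (K,C)-quasi-isometry, then Φ = u ∘ φ : DL_d^k(q) → DL_d^k(q) is a quasi-isometry with |Φ^{−1}(v)| = k for every vertex v. -/

import Mathlib

/-- Graph distance associated to an edge relation `E`: the length of a shortest `E`-path. -/
noncomputable def gdist {D : Type*} (E : D → D → Prop) (x y : D) : ℕ :=
  sInf {n | ∃ f : ℕ → D, f 0 = x ∧ f n = y ∧ ∀ m < n, E (f m) (f (m + 1))}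

/-- Vertices of the Diestel-Leader graph: points of the product of the trees whose heights sum
to zero. -/
def DLvert {d : ℕ} (V : Fin d → Type*) (h : ∀ i, V i → ℤ) : Type _ :=
  {x : ∀ i, V i // ∑ i, h i (x i) = 0}

/-- Edges of the Diestel-Leader graph: two coordinates move along tree edges, all others fixed. -/
def DLedge {d : ℕ} {V : Fin d → Type*} (adj : ∀ i, V i → V i → Prop) (h : ∀ i, V i → ℤ)
    (x y : DLvert V h) : Prop :=
  ∃ i j, i ≠ j ∧ adj i (x.1 i) (y.1 i) ∧ adj j (x.1 j) (y.1 j) ∧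
    ∀ l, l ≠ i → l ≠ j → x.1 l = y.1 l

/-- The graph metric on `DL_d(q)`. -/
noncomputable def DLdist {d : ℕ} {V : Fin d → Type*} (adj : ∀ i, V i → V i → Prop)
    (h : ∀ i, V i → ℤ) (x y : DLvert V h) : ℕ :=
  gdist (DLedge adj h) x y

section GdistLemmas

variable {D : Type*}

lemma gdist_le (E : D → D → Prop) {x y : D} {n : ℕ} (f : ℕ → D)
    (h0 : f 0 = x) (hn : f n = y) (he : ∀ m < n, E (f m) (f (m + 1))) :
    gdist E x y ≤ n :=
  Nat.sInf_le ⟨f, h0, hn, he⟩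

lemma gdist_self' (E : D → D → Prop) (x : D) : gdist E x x = 0 :=
  Nat.le_zero.1 (gdist_le E (fun _ => x) rfl rfl (fun m hm => absurd hm (Nat.not_lt_zero m)))

lemma gdist_path (E : D → D → Prop) {x y : D}
    (hne : ∃ n, ∃ f : ℕ → D, f 0 = x ∧ f n = y ∧ ∀ m < n, E (f m) (f (m + 1))) :
    ∃ f : ℕ → D, f 0 = x ∧ f (gdist E x y) = y ∧ ∀ m < gdist E x y, E (f m) (f (m + 1)) :=
  Nat.sInf_mem hne

lemma gdist_triangle' (E : D → D → Prop) {x y z : D}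
    (h1 : ∃ n, ∃ f : ℕ → D, f 0 = x ∧ f n = y ∧ ∀ m < n, E (f m) (f (m + 1)))
    (h2 : ∃ n, ∃ f : ℕ → D, f 0 = y ∧ f n = z ∧ ∀ m < n, E (f m) (f (m + 1))) :
    gdist E x z ≤ gdist E x y + gdist E y z := by
  obtain ⟨f, hf0, hfn, hfe⟩ := gdist_path E h1
  obtain ⟨g, hg0, hgn, hge⟩ := gdist_path E h2
  set n := gdist E x y with hn
  set m := gdist E y z with hm
  apply gdist_le E (fun t => if t < n then f t else g (t - n))
  · by_cases h0 : 0 < n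
    · simp [h0, hf0]
    · have hn0 : n = 0 := by omega
      simp only [hn0, lt_self_iff_false, if_false, Nat.sub_zero]
      rw [hg0, ← hfn, hn0, hf0]
  · simp only [Nat.add_sub_cancel_left, if_neg (by omega : ¬ n + m < n)]
    exact hgn
  · intro t ht
    by_cases h1t : t + 1 < n
    · simp only [if_pos (by omega : t < n), if_pos h1t]
      exact hfe t (by omega)
    · by_cases h2t : t < n
      · have hn1 : n = t + 1 := by omega
        simp only [if_pos h2t, if_neg h1t]
        have : g (t + 1 - n) = f (t + 1) := by
          rw [hn1, Nat.sub_self, hg0, ← hfn, hn1]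
        rw [this]
        exact hfe t (by omega)
      · simp only [if_neg h2t, if_neg h1t]
        have h3 : t + 1 - n = (t - n) + 1 := by omega
        rw [h3]
        exact hge (t - n) (by omega)

lemma gdist_symm_le (E : D → D → Prop) (hE : ∀ a b, E a b → E b a) {x y : D}
    (h1 : ∃ n, ∃ f : ℕ → D, f 0 = y ∧ f n = x ∧ ∀ m < n, E (f m) (f (m + 1))) :
    gdist E x y ≤ gdist E y x := by
  obtain ⟨f, hf0, hfn, hfe⟩ := gdist_path E h1
  set n := gdist E y x with hn
  apply gdist_le E (fun t => f (n - t))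
  · simpa using hfn
  · simpa using hf0
  · intro t ht
    have h2 : n - t = (n - (t + 1)) + 1 := by omega
    have h3 := hfe (n - (t + 1)) (by omega)
    rw [h2]
    exact hE _ _ h3

end GdistLemmas

/-- An equivalence between two types of the same nonzero finite cardinality. -/
noncomputable def DLce {A B : Type*} {q : ℕ} (hq : q ≠ 0) (h1 : Nat.card A = q)
    (h2 : Nat.card B = q) : A ≃ B :=
  ((Nat.equivFinOfCardPos (by rw [h1]; exact hq)).trans
    (finCongr (h1.trans h2.symm))).trans (Nat.equivFinOfCardPos (by rw [h2]; exact hq)).symm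

namespace DLaux

variable {d : ℕ} {V : Fin d → Type*}

open Classical in
/-- The (unique) upward neighbour of a vertex in a tree. -/
noncomputable def par (adj : ∀ i, V i → V i → Prop) (h : ∀ i, V i → ℤ) (i : Fin d) (v : V i) :
    V i :=
  if hn : ∃ w, adj i v w ∧ h i w = h i v + 1 then hn.choose else v

lemma par_spec (adj : ∀ i, V i → V i → Prop) (h : ∀ i, V i → ℤ)
    (hup : ∀ i (v : V i), Nat.card {w : V i // adj i v w ∧ h i w = h i v + 1} = 1)
    (i : Fin d) (v : V i) :
    adj i v (par adj h i v) ∧ h i (par adj h i v) = h i v + 1 := by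
  have hn : ∃ w, adj i v w ∧ h i w = h i v + 1 := by
    obtain ⟨⟨w, hw⟩, -⟩ := Nat.card_eq_one_iff_exists.1 (hup i v)
    exact ⟨w, hw⟩
  rw [par, dif_pos hn]
  exact hn.choose_spec

lemma par_eq (adj : ∀ i, V i → V i → Prop) (h : ∀ i, V i → ℤ)
    (hup : ∀ i (v : V i), Nat.card {w : V i // adj i v w ∧ h i w = h i v + 1} = 1)
    {i : Fin d} {v w : V i} (h1 : adj i v w) (h2 : h i w = h i v + 1) :
    par adj h i v = w := by
  have hs : Subsingleton {w : V i // adj i v w ∧ h i w = h i v + 1} :=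
    (Nat.card_eq_one_iff_unique.1 (hup i v)).1
  have := Subsingleton.elim (⟨par adj h i v, par_spec adj h hup i v⟩ :
    {w : V i // adj i v w ∧ h i w = h i v + 1}) ⟨w, h1, h2⟩
  exact congrArg Subtype.val this

/-- A chosen bijection between the children of `b` in tree `j` and the children of `a` in
tree `i`. -/
noncomputable def ch (adj : ∀ i, V i → V i → Prop) (h : ∀ i, V i → ℤ) (q : ℕ) (hq : q ≠ 0)
    (hdown : ∀ i (v : V i), Nat.card {w : V i // adj i v w ∧ h i w = h i v - 1} = q)
    (i j : Fin d) (a : V i) (b : V j) :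
    {w : V j // adj j b w ∧ h j w = h j b - 1} ≃ {w : V i // adj i a w ∧ h i w = h i a - 1} :=
  DLce hq (hdown j b) (hdown i a)

lemma ch_symm_congr (adj : ∀ i, V i → V i → Prop) (h : ∀ i, V i → ℤ) (q : ℕ) (hq : q ≠ 0)
    (hdown : ∀ i (v : V i), Nat.card {w : V i // adj i v w ∧ h i w = h i v - 1} = q)
    (i0 i1 : Fin d) {a a' : V i0} (haa : a = a') (b : V i1) (c : V i0)
    (hc : adj i0 a c ∧ h i0 c = h i0 a - 1) (hc' : adj i0 a' c ∧ h i0 c = h i0 a' - 1) :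
    ((ch adj h q hq hdown i0 i1 a b).symm ⟨c, hc⟩).1 =
      ((ch adj h q hq hdown i0 i1 a' b).symm ⟨c, hc'⟩).1 := by
  subst haa; rfl

lemma ch_congr (adj : ∀ i, V i → V i → Prop) (h : ∀ i, V i → ℤ) (q : ℕ) (hq : q ≠ 0)
    (hdown : ∀ i (v : V i), Nat.card {w : V i // adj i v w ∧ h i w = h i v - 1} = q)
    (i0 i1 : Fin d) (a : V i0) {b b' : V i1} (hbb : b = b') (c : V i1)
    (hc : adj i1 b c ∧ h i1 c = h i1 b - 1) (hc' : adj i1 b' c ∧ h i1 c = h i1 b' - 1) :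
    ((ch adj h q hq hdown i0 i1 a b) ⟨c, hc⟩).1 =
      ((ch adj h q hq hdown i0 i1 a b') ⟨c, hc'⟩).1 := by
  subst hbb; rfl

end DLaux

namespace DLaux

variable {d : ℕ} {V : Fin d → Type*}

noncomputable def Fsub (adj : ∀ i, V i → V i → Prop) (h : ∀ i, V i → ℤ) (q : ℕ) (hq : q ≠ 0)
    (i0 i1 : Fin d)
    (hadjsymm : ∀ i (a b : V i), adj i a b ↔ adj i b a)
    (hdown : ∀ i (v : V i), Nat.card {w : V i // adj i v w ∧ h i w = h i v - 1} = q)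
    (hup : ∀ i (v : V i), Nat.card {w : V i // adj i v w ∧ h i w = h i v + 1} = 1) (a : V i0) (w : V i1) :
    {w' : V i0 // adj i0 a w' ∧ h i0 w' = h i0 a - 1} :=
  ch adj h q hq hdown i0 i1 a (par adj h i1 w)
    ⟨w, (hadjsymm i1 w (par adj h i1 w)).1 (par_spec adj h hup i1 w).1,
      by have := (par_spec adj h hup i1 w).2; omega⟩

noncomputable def Ffun (adj : ∀ i, V i → V i → Prop) (h : ∀ i, V i → ℤ) (q : ℕ) (hq : q ≠ 0)
    (i0 i1 : Fin d)
    (hadjsymm : ∀ i (a b : V i), adj i a b ↔ adj i b a)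
    (hdown : ∀ i (v : V i), Nat.card {w : V i // adj i v w ∧ h i w = h i v - 1} = q)
    (hup : ∀ i (v : V i), Nat.card {w : V i // adj i v w ∧ h i w = h i v + 1} = 1) (a : V i0) (w : V i1) : V i0 :=
  (Fsub adj h q hq i0 i1 hadjsymm hdown hup a w).1

lemma Ffun_mem (adj : ∀ i, V i → V i → Prop) (h : ∀ i, V i → ℤ) (q : ℕ) (hq : q ≠ 0)
    (i0 i1 : Fin d)
    (hadjsymm : ∀ i (a b : V i), adj i a b ↔ adj i b a)
    (hdown : ∀ i (v : V i), Nat.card {w : V i // adj i v w ∧ h i w = h i v - 1} = q)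
    (hup : ∀ i (v : V i), Nat.card {w : V i // adj i v w ∧ h i w = h i v + 1} = 1) (a : V i0) (w : V i1) :
    adj i0 a (Ffun adj h q hq i0 i1 hadjsymm hdown hup a w) ∧ h i0 (Ffun adj h q hq i0 i1 hadjsymm hdown hup a w) = h i0 a - 1 :=
  (Fsub adj h q hq i0 i1 hadjsymm hdown hup a w).2

noncomputable def Gsub (adj : ∀ i, V i → V i → Prop) (h : ∀ i, V i → ℤ) (q : ℕ) (hq : q ≠ 0)
    (i0 i1 : Fin d)
    (hadjsymm : ∀ i (a b : V i), adj i a b ↔ adj i b a)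
    (hdown : ∀ i (v : V i), Nat.card {w : V i // adj i v w ∧ h i w = h i v - 1} = q)
    (hup : ∀ i (v : V i), Nat.card {w : V i // adj i v w ∧ h i w = h i v + 1} = 1) (y0 : V i0) (y1 : V i1) :
    {w' : V i1 // adj i1 y1 w' ∧ h i1 w' = h i1 y1 - 1} :=
  (ch adj h q hq hdown i0 i1 (par adj h i0 y0) y1).symm
    ⟨y0, (hadjsymm i0 y0 (par adj h i0 y0)).1 (par_spec adj h hup i0 y0).1,
      by have := (par_spec adj h hup i0 y0).2; omega⟩

noncomputable def Gfun (adj : ∀ i, V i → V i → Prop) (h : ∀ i, V i → ℤ) (q : ℕ) (hq : q ≠ 0)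
    (i0 i1 : Fin d)
    (hadjsymm : ∀ i (a b : V i), adj i a b ↔ adj i b a)
    (hdown : ∀ i (v : V i), Nat.card {w : V i // adj i v w ∧ h i w = h i v - 1} = q)
    (hup : ∀ i (v : V i), Nat.card {w : V i // adj i v w ∧ h i w = h i v + 1} = 1) (y0 : V i0) (y1 : V i1) : V i1 :=
  (Gsub adj h q hq i0 i1 hadjsymm hdown hup y0 y1).1

lemma Gfun_mem (adj : ∀ i, V i → V i → Prop) (h : ∀ i, V i → ℤ) (q : ℕ) (hq : q ≠ 0)
    (i0 i1 : Fin d)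
    (hadjsymm : ∀ i (a b : V i), adj i a b ↔ adj i b a)
    (hdown : ∀ i (v : V i), Nat.card {w : V i // adj i v w ∧ h i w = h i v - 1} = q)
    (hup : ∀ i (v : V i), Nat.card {w : V i // adj i v w ∧ h i w = h i v + 1} = 1) (y0 : V i0) (y1 : V i1) :
    adj i1 y1 (Gfun adj h q hq i0 i1 hadjsymm hdown hup y0 y1) ∧ h i1 (Gfun adj h q hq i0 i1 hadjsymm hdown hup y0 y1) = h i1 y1 - 1 :=
  (Gsub adj h q hq i0 i1 hadjsymm hdown hup y0 y1).2

lemma par_Ffun (adj : ∀ i, V i → V i → Prop) (h : ∀ i, V i → ℤ) (q : ℕ) (hq : q ≠ 0)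
    (i0 i1 : Fin d)
    (hadjsymm : ∀ i (a b : V i), adj i a b ↔ adj i b a)
    (hdown : ∀ i (v : V i), Nat.card {w : V i // adj i v w ∧ h i w = h i v - 1} = q)
    (hup : ∀ i (v : V i), Nat.card {w : V i // adj i v w ∧ h i w = h i v + 1} = 1) (a : V i0) (w : V i1) :
    par adj h i0 (Ffun adj h q hq i0 i1 hadjsymm hdown hup a w) = a :=
  par_eq adj h hup ((hadjsymm i0 a (Ffun adj h q hq i0 i1 hadjsymm hdown hup a w)).1 (Ffun_mem adj h q hq i0 i1 hadjsymm hdown hup a w).1)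
    (by have := (Ffun_mem adj h q hq i0 i1 hadjsymm hdown hup a w).2; omega)

lemma par_Gfun (adj : ∀ i, V i → V i → Prop) (h : ∀ i, V i → ℤ) (q : ℕ) (hq : q ≠ 0)
    (i0 i1 : Fin d)
    (hadjsymm : ∀ i (a b : V i), adj i a b ↔ adj i b a)
    (hdown : ∀ i (v : V i), Nat.card {w : V i // adj i v w ∧ h i w = h i v - 1} = q)
    (hup : ∀ i (v : V i), Nat.card {w : V i // adj i v w ∧ h i w = h i v + 1} = 1) (y0 : V i0) (y1 : V i1) :
    par adj h i1 (Gfun adj h q hq i0 i1 hadjsymm hdown hup y0 y1) = y1 :=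
  par_eq adj h hup ((hadjsymm i1 y1 (Gfun adj h q hq i0 i1 hadjsymm hdown hup y0 y1)).1 (Gfun_mem adj h q hq i0 i1 hadjsymm hdown hup y0 y1).1)
    (by have := (Gfun_mem adj h q hq i0 i1 hadjsymm hdown hup y0 y1).2; omega)

lemma Gfun_Ffun (adj : ∀ i, V i → V i → Prop) (h : ∀ i, V i → ℤ) (q : ℕ) (hq : q ≠ 0)
    (i0 i1 : Fin d)
    (hadjsymm : ∀ i (a b : V i), adj i a b ↔ adj i b a)
    (hdown : ∀ i (v : V i), Nat.card {w : V i // adj i v w ∧ h i w = h i v - 1} = q)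
    (hup : ∀ i (v : V i), Nat.card {w : V i // adj i v w ∧ h i w = h i v + 1} = 1) (a : V i0) (w : V i1) :
    Gfun adj h q hq i0 i1 hadjsymm hdown hup (Ffun adj h q hq i0 i1 hadjsymm hdown hup a w) (par adj h i1 w) = w := by
  have h1 : par adj h i0 (Ffun adj h q hq i0 i1 hadjsymm hdown hup a w) = a := par_Ffun adj h q hq i0 i1 hadjsymm hdown hup a w
  unfold Gfun Gsub
  rw [ch_symm_congr adj h q hq hdown i0 i1 h1 (par adj h i1 w) (Ffun adj h q hq i0 i1 hadjsymm hdown hup a w) _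
      (Ffun_mem adj h q hq i0 i1 hadjsymm hdown hup a w)]
  have h3 : (⟨Ffun adj h q hq i0 i1 hadjsymm hdown hup a w, Ffun_mem adj h q hq i0 i1 hadjsymm hdown hup a w⟩ :
      {w' : V i0 // adj i0 a w' ∧ h i0 w' = h i0 a - 1}) =
      ch adj h q hq hdown i0 i1 a (par adj h i1 w)
        ⟨w, (hadjsymm i1 w (par adj h i1 w)).1 (par_spec adj h hup i1 w).1,
          by have := (par_spec adj h hup i1 w).2; omega⟩ := Subtype.ext rfl
  rw [h3, Equiv.symm_apply_apply]

lemma Ffun_Gfun (adj : ∀ i, V i → V i → Prop) (h : ∀ i, V i → ℤ) (q : ℕ) (hq : q ≠ 0)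
    (i0 i1 : Fin d)
    (hadjsymm : ∀ i (a b : V i), adj i a b ↔ adj i b a)
    (hdown : ∀ i (v : V i), Nat.card {w : V i // adj i v w ∧ h i w = h i v - 1} = q)
    (hup : ∀ i (v : V i), Nat.card {w : V i // adj i v w ∧ h i w = h i v + 1} = 1) (y0 : V i0) (y1 : V i1) :
    Ffun adj h q hq i0 i1 hadjsymm hdown hup (par adj h i0 y0) (Gfun adj h q hq i0 i1 hadjsymm hdown hup y0 y1) = y0 := by
  have h1 : par adj h i1 (Gfun adj h q hq i0 i1 hadjsymm hdown hup y0 y1) = y1 := par_Gfun adj h q hq i0 i1 hadjsymm hdown hup y0 y1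
  unfold Ffun Fsub
  rw [ch_congr adj h q hq hdown i0 i1 (par adj h i0 y0) h1 (Gfun adj h q hq i0 i1 hadjsymm hdown hup y0 y1) _
      (Gfun_mem adj h q hq i0 i1 hadjsymm hdown hup y0 y1)]
  have h3 : (⟨Gfun adj h q hq i0 i1 hadjsymm hdown hup y0 y1, Gfun_mem adj h q hq i0 i1 hadjsymm hdown hup y0 y1⟩ :
      {w' : V i1 // adj i1 y1 w' ∧ h i1 w' = h i1 y1 - 1}) =
      (ch adj h q hq hdown i0 i1 (par adj h i0 y0) y1).symm
        ⟨y0, (hadjsymm i0 y0 (par adj h i0 y0)).1 (par_spec adj h hup i0 y0).1,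
          by have := (par_spec adj h hup i0 y0).2; omega⟩ := Subtype.ext rfl
  rw [h3, Equiv.apply_symm_apply]

end DLaux

namespace DLaux

variable {d : ℕ} {V : Fin d → Type*}

lemma sum_upd2 (h : ∀ i, V i → ℤ) (x : ∀ i, V i) {i0 i1 : Fin d} (hne : i0 ≠ i1)
    (a : V i0) (b : V i1)
    (hab : h i0 a + h i1 b = h i0 (x i0) + h i1 (x i1)) :
    ∑ i, h i (Function.update (Function.update x i1 b) i0 a i) = ∑ i, h i (x i) := by
  classical
  have key : ∀ f : ∀ i, V i, ∑ i, h i (f i) =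
      h i0 (f i0) + (h i1 (f i1) + ∑ i ∈ (Finset.univ.erase i0).erase i1, h i (f i)) := by
    intro f
    rw [← Finset.add_sum_erase Finset.univ (fun i => h i (f i)) (Finset.mem_univ i0),
      ← Finset.add_sum_erase (Finset.univ.erase i0) (fun i => h i (f i))
        (Finset.mem_erase.2 ⟨Ne.symm hne, Finset.mem_univ i1⟩)]
  rw [key, key]
  have e0 : Function.update (Function.update x i1 b) i0 a i0 = a := Function.update_self _ _ _
  have e1 : Function.update (Function.update x i1 b) i0 a i1 = b := by
    rw [Function.update_of_ne (Ne.symm hne), Function.update_self]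
  have e2 : ∑ i ∈ (Finset.univ.erase i0).erase i1,
      h i (Function.update (Function.update x i1 b) i0 a i) =
      ∑ i ∈ (Finset.univ.erase i0).erase i1, h i (x i) := by
    apply Finset.sum_congr rfl
    intro i hi
    rw [Finset.mem_erase, Finset.mem_erase] at hi
    rw [Function.update_of_ne hi.2.1, Function.update_of_ne hi.1]
  rw [e0, e1, e2]
  omega

/-- The downward step map on the Diestel-Leader graph. -/
noncomputable def Sv (adj : ∀ i, V i → V i → Prop) (h : ∀ i, V i → ℤ) (q : ℕ) (hq : q ≠ 0)
    (i0 i1 : Fin d) (hne : i0 ≠ i1)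
    (hadjsymm : ∀ i (a b : V i), adj i a b ↔ adj i b a)
    (hdown : ∀ i (v : V i), Nat.card {w : V i // adj i v w ∧ h i w = h i v - 1} = q)
    (hup : ∀ i (v : V i), Nat.card {w : V i // adj i v w ∧ h i w = h i v + 1} = 1) (x : DLvert V h) : DLvert V h := by
  classical
  exact ⟨Function.update (Function.update x.1 i1 (par adj h i1 (x.1 i1))) i0
    (Ffun adj h q hq i0 i1 hadjsymm hdown hup (x.1 i0) (x.1 i1)),
    by
      rw [sum_upd2 h x.1 hne _ _ (by
        have h1 := (Ffun_mem adj h q hq i0 i1 hadjsymm hdown hup (x.1 i0) (x.1 i1)).2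
        have h2 := (par_spec adj h hup i1 (x.1 i1)).2
        omega)]
      exact x.2⟩

/-- The upward step map on the Diestel-Leader graph. -/
noncomputable def Tv (adj : ∀ i, V i → V i → Prop) (h : ∀ i, V i → ℤ) (q : ℕ) (hq : q ≠ 0)
    (i0 i1 : Fin d) (hne : i0 ≠ i1)
    (hadjsymm : ∀ i (a b : V i), adj i a b ↔ adj i b a)
    (hdown : ∀ i (v : V i), Nat.card {w : V i // adj i v w ∧ h i w = h i v - 1} = q)
    (hup : ∀ i (v : V i), Nat.card {w : V i // adj i v w ∧ h i w = h i v + 1} = 1) (y : DLvert V h) : DLvert V h := by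
  classical
  exact ⟨Function.update (Function.update y.1 i1 (Gfun adj h q hq i0 i1 hadjsymm hdown hup (y.1 i0) (y.1 i1))) i0
    (par adj h i0 (y.1 i0)),
    by
      rw [sum_upd2 h y.1 hne _ _ (by
        have h1 := (Gfun_mem adj h q hq i0 i1 hadjsymm hdown hup (y.1 i0) (y.1 i1)).2
        have h2 := (par_spec adj h hup i0 (y.1 i0)).2
        omega)]
      exact y.2⟩

lemma Sv_i0 (adj : ∀ i, V i → V i → Prop) (h : ∀ i, V i → ℤ) (q : ℕ) (hq : q ≠ 0)
    (i0 i1 : Fin d) (hne : i0 ≠ i1)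
    (hadjsymm : ∀ i (a b : V i), adj i a b ↔ adj i b a)
    (hdown : ∀ i (v : V i), Nat.card {w : V i // adj i v w ∧ h i w = h i v - 1} = q)
    (hup : ∀ i (v : V i), Nat.card {w : V i // adj i v w ∧ h i w = h i v + 1} = 1) (x : DLvert V h) :
    (Sv adj h q hq i0 i1 hne hadjsymm hdown hup x).1 i0 = Ffun adj h q hq i0 i1 hadjsymm hdown hup (x.1 i0) (x.1 i1) := by
  simp [Sv, Function.update_self]

lemma Sv_i1 (adj : ∀ i, V i → V i → Prop) (h : ∀ i, V i → ℤ) (q : ℕ) (hq : q ≠ 0)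
    (i0 i1 : Fin d) (hne : i0 ≠ i1)
    (hadjsymm : ∀ i (a b : V i), adj i a b ↔ adj i b a)
    (hdown : ∀ i (v : V i), Nat.card {w : V i // adj i v w ∧ h i w = h i v - 1} = q)
    (hup : ∀ i (v : V i), Nat.card {w : V i // adj i v w ∧ h i w = h i v + 1} = 1) (x : DLvert V h) :
    (Sv adj h q hq i0 i1 hne hadjsymm hdown hup x).1 i1 = par adj h i1 (x.1 i1) := by
  simp only [Sv]
  rw [Function.update_of_ne (Ne.symm hne), Function.update_self]

lemma Sv_other (adj : ∀ i, V i → V i → Prop) (h : ∀ i, V i → ℤ) (q : ℕ) (hq : q ≠ 0)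
    (i0 i1 : Fin d) (hne : i0 ≠ i1)
    (hadjsymm : ∀ i (a b : V i), adj i a b ↔ adj i b a)
    (hdown : ∀ i (v : V i), Nat.card {w : V i // adj i v w ∧ h i w = h i v - 1} = q)
    (hup : ∀ i (v : V i), Nat.card {w : V i // adj i v w ∧ h i w = h i v + 1} = 1) (x : DLvert V h) {l : Fin d} (h0 : l ≠ i0) (h1 : l ≠ i1) :
    (Sv adj h q hq i0 i1 hne hadjsymm hdown hup x).1 l = x.1 l := by
  simp only [Sv]
  rw [Function.update_of_ne h0, Function.update_of_ne h1]

lemma Tv_i0 (adj : ∀ i, V i → V i → Prop) (h : ∀ i, V i → ℤ) (q : ℕ) (hq : q ≠ 0)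
    (i0 i1 : Fin d) (hne : i0 ≠ i1)
    (hadjsymm : ∀ i (a b : V i), adj i a b ↔ adj i b a)
    (hdown : ∀ i (v : V i), Nat.card {w : V i // adj i v w ∧ h i w = h i v - 1} = q)
    (hup : ∀ i (v : V i), Nat.card {w : V i // adj i v w ∧ h i w = h i v + 1} = 1) (y : DLvert V h) :
    (Tv adj h q hq i0 i1 hne hadjsymm hdown hup y).1 i0 = par adj h i0 (y.1 i0) := by
  simp [Tv, Function.update_self]

lemma Tv_i1 (adj : ∀ i, V i → V i → Prop) (h : ∀ i, V i → ℤ) (q : ℕ) (hq : q ≠ 0)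
    (i0 i1 : Fin d) (hne : i0 ≠ i1)
    (hadjsymm : ∀ i (a b : V i), adj i a b ↔ adj i b a)
    (hdown : ∀ i (v : V i), Nat.card {w : V i // adj i v w ∧ h i w = h i v - 1} = q)
    (hup : ∀ i (v : V i), Nat.card {w : V i // adj i v w ∧ h i w = h i v + 1} = 1) (y : DLvert V h) :
    (Tv adj h q hq i0 i1 hne hadjsymm hdown hup y).1 i1 = Gfun adj h q hq i0 i1 hadjsymm hdown hup (y.1 i0) (y.1 i1) := by
  simp only [Tv]
  rw [Function.update_of_ne (Ne.symm hne), Function.update_self]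

lemma Tv_other (adj : ∀ i, V i → V i → Prop) (h : ∀ i, V i → ℤ) (q : ℕ) (hq : q ≠ 0)
    (i0 i1 : Fin d) (hne : i0 ≠ i1)
    (hadjsymm : ∀ i (a b : V i), adj i a b ↔ adj i b a)
    (hdown : ∀ i (v : V i), Nat.card {w : V i // adj i v w ∧ h i w = h i v - 1} = q)
    (hup : ∀ i (v : V i), Nat.card {w : V i // adj i v w ∧ h i w = h i v + 1} = 1) (y : DLvert V h) {l : Fin d} (h0 : l ≠ i0) (h1 : l ≠ i1) :
    (Tv adj h q hq i0 i1 hne hadjsymm hdown hup y).1 l = y.1 l := by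
  simp only [Tv]
  rw [Function.update_of_ne h0, Function.update_of_ne h1]

lemma Tv_Sv (adj : ∀ i, V i → V i → Prop) (h : ∀ i, V i → ℤ) (q : ℕ) (hq : q ≠ 0)
    (i0 i1 : Fin d) (hne : i0 ≠ i1)
    (hadjsymm : ∀ i (a b : V i), adj i a b ↔ adj i b a)
    (hdown : ∀ i (v : V i), Nat.card {w : V i // adj i v w ∧ h i w = h i v - 1} = q)
    (hup : ∀ i (v : V i), Nat.card {w : V i // adj i v w ∧ h i w = h i v + 1} = 1) (x : DLvert V h) : Tv adj h q hq i0 i1 hne hadjsymm hdown hup (Sv adj h q hq i0 i1 hne hadjsymm hdown hup x) = x := by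
  apply Subtype.ext
  funext l
  rcases eq_or_ne l i0 with hl | hl0
  · rw [hl]
    rw [Tv_i0 adj h q hq i0 i1 hne hadjsymm hdown hup, Sv_i0 adj h q hq i0 i1 hne hadjsymm hdown hup, par_Ffun adj h q hq i0 i1 hadjsymm hdown hup]
  · rcases eq_or_ne l i1 with hl | hl1
    · rw [hl]
      rw [Tv_i1 adj h q hq i0 i1 hne hadjsymm hdown hup, Sv_i0 adj h q hq i0 i1 hne hadjsymm hdown hup, Sv_i1 adj h q hq i0 i1 hne hadjsymm hdown hup, Gfun_Ffun adj h q hq i0 i1 hadjsymm hdown hup]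
    · rw [Tv_other adj h q hq i0 i1 hne hadjsymm hdown hup _ hl0 hl1, Sv_other adj h q hq i0 i1 hne hadjsymm hdown hup _ hl0 hl1]

lemma Sv_Tv (adj : ∀ i, V i → V i → Prop) (h : ∀ i, V i → ℤ) (q : ℕ) (hq : q ≠ 0)
    (i0 i1 : Fin d) (hne : i0 ≠ i1)
    (hadjsymm : ∀ i (a b : V i), adj i a b ↔ adj i b a)
    (hdown : ∀ i (v : V i), Nat.card {w : V i // adj i v w ∧ h i w = h i v - 1} = q)
    (hup : ∀ i (v : V i), Nat.card {w : V i // adj i v w ∧ h i w = h i v + 1} = 1) (y : DLvert V h) : Sv adj h q hq i0 i1 hne hadjsymm hdown hup (Tv adj h q hq i0 i1 hne hadjsymm hdown hup y) = y := by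
  apply Subtype.ext
  funext l
  rcases eq_or_ne l i0 with hl | hl0
  · rw [hl]
    rw [Sv_i0 adj h q hq i0 i1 hne hadjsymm hdown hup, Tv_i0 adj h q hq i0 i1 hne hadjsymm hdown hup, Tv_i1 adj h q hq i0 i1 hne hadjsymm hdown hup, Ffun_Gfun adj h q hq i0 i1 hadjsymm hdown hup]
  · rcases eq_or_ne l i1 with hl | hl1
    · rw [hl]
      rw [Sv_i1 adj h q hq i0 i1 hne hadjsymm hdown hup, Tv_i1 adj h q hq i0 i1 hne hadjsymm hdown hup, par_Gfun adj h q hq i0 i1 hadjsymm hdown hup]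
    · rw [Sv_other adj h q hq i0 i1 hne hadjsymm hdown hup _ hl0 hl1, Tv_other adj h q hq i0 i1 hne hadjsymm hdown hup _ hl0 hl1]

lemma edge_Sv (adj : ∀ i, V i → V i → Prop) (h : ∀ i, V i → ℤ) (q : ℕ) (hq : q ≠ 0)
    (i0 i1 : Fin d) (hne : i0 ≠ i1)
    (hadjsymm : ∀ i (a b : V i), adj i a b ↔ adj i b a)
    (hdown : ∀ i (v : V i), Nat.card {w : V i // adj i v w ∧ h i w = h i v - 1} = q)
    (hup : ∀ i (v : V i), Nat.card {w : V i // adj i v w ∧ h i w = h i v + 1} = 1) (x : DLvert V h) : DLedge adj h x (Sv adj h q hq i0 i1 hne hadjsymm hdown hup x) := by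
  refine ⟨i0, i1, hne, ?_, ?_, ?_⟩
  · rw [Sv_i0 adj h q hq i0 i1 hne hadjsymm hdown hup]
    exact (Ffun_mem adj h q hq i0 i1 hadjsymm hdown hup (x.1 i0) (x.1 i1)).1
  · rw [Sv_i1 adj h q hq i0 i1 hne hadjsymm hdown hup]
    exact (par_spec adj h hup i1 (x.1 i1)).1
  · intro l h0 h1
    exact (Sv_other adj h q hq i0 i1 hne hadjsymm hdown hup x h0 h1).symm

lemma edge_Tv (adj : ∀ i, V i → V i → Prop) (h : ∀ i, V i → ℤ) (q : ℕ) (hq : q ≠ 0)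
    (i0 i1 : Fin d) (hne : i0 ≠ i1)
    (hadjsymm : ∀ i (a b : V i), adj i a b ↔ adj i b a)
    (hdown : ∀ i (v : V i), Nat.card {w : V i // adj i v w ∧ h i w = h i v - 1} = q)
    (hup : ∀ i (v : V i), Nat.card {w : V i // adj i v w ∧ h i w = h i v + 1} = 1) (y : DLvert V h) : DLedge adj h y (Tv adj h q hq i0 i1 hne hadjsymm hdown hup y) := by
  refine ⟨i0, i1, hne, ?_, ?_, ?_⟩
  · rw [Tv_i0 adj h q hq i0 i1 hne hadjsymm hdown hup]
    exact (par_spec adj h hup i0 (y.1 i0)).1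
  · rw [Tv_i1 adj h q hq i0 i1 hne hadjsymm hdown hup]
    exact (hadjsymm i1 (Gfun adj h q hq i0 i1 hadjsymm hdown hup (y.1 i0) (y.1 i1)) (y.1 i1)).1
      ((hadjsymm i1 (y.1 i1) (Gfun adj h q hq i0 i1 hadjsymm hdown hup (y.1 i0) (y.1 i1))).1
        (Gfun_mem adj h q hq i0 i1 hadjsymm hdown hup (y.1 i0) (y.1 i1)).1)
  · intro l h0 h1
    exact (Tv_other adj h q hq i0 i1 hne hadjsymm hdown hup y h0 h1).symm

lemma h_Sv (adj : ∀ i, V i → V i → Prop) (h : ∀ i, V i → ℤ) (q : ℕ) (hq : q ≠ 0)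
    (i0 i1 : Fin d) (hne : i0 ≠ i1)
    (hadjsymm : ∀ i (a b : V i), adj i a b ↔ adj i b a)
    (hdown : ∀ i (v : V i), Nat.card {w : V i // adj i v w ∧ h i w = h i v - 1} = q)
    (hup : ∀ i (v : V i), Nat.card {w : V i // adj i v w ∧ h i w = h i v + 1} = 1) (x : DLvert V h) :
    h i0 ((Sv adj h q hq i0 i1 hne hadjsymm hdown hup x).1 i0) = h i0 (x.1 i0) - 1 := by
  rw [Sv_i0 adj h q hq i0 i1 hne hadjsymm hdown hup]
  exact (Ffun_mem adj h q hq i0 i1 hadjsymm hdown hup (x.1 i0) (x.1 i1)).2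

lemma h_Tv (adj : ∀ i, V i → V i → Prop) (h : ∀ i, V i → ℤ) (q : ℕ) (hq : q ≠ 0)
    (i0 i1 : Fin d) (hne : i0 ≠ i1)
    (hadjsymm : ∀ i (a b : V i), adj i a b ↔ adj i b a)
    (hdown : ∀ i (v : V i), Nat.card {w : V i // adj i v w ∧ h i w = h i v - 1} = q)
    (hup : ∀ i (v : V i), Nat.card {w : V i // adj i v w ∧ h i w = h i v + 1} = 1) (y : DLvert V h) :
    h i0 ((Tv adj h q hq i0 i1 hne hadjsymm hdown hup y).1 i0) = h i0 (y.1 i0) + 1 := by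
  rw [Tv_i0 adj h q hq i0 i1 hne hadjsymm hdown hup]
  exact (par_spec adj h hup i0 (y.1 i0)).2

lemma h_Sv_iter (adj : ∀ i, V i → V i → Prop) (h : ∀ i, V i → ℤ) (q : ℕ) (hq : q ≠ 0)
    (i0 i1 : Fin d) (hne : i0 ≠ i1)
    (hadjsymm : ∀ i (a b : V i), adj i a b ↔ adj i b a)
    (hdown : ∀ i (v : V i), Nat.card {w : V i // adj i v w ∧ h i w = h i v - 1} = q)
    (hup : ∀ i (v : V i), Nat.card {w : V i // adj i v w ∧ h i w = h i v + 1} = 1) (x : DLvert V h) (r : ℕ) :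
    h i0 (((Sv adj h q hq i0 i1 hne hadjsymm hdown hup)^[r] x).1 i0) = h i0 (x.1 i0) - r := by
  induction r with
  | zero => simp
  | succ n ih =>
    rw [Function.iterate_succ_apply', h_Sv adj h q hq i0 i1 hne hadjsymm hdown hup, ih]
    push_cast
    ring

lemma h_Tv_iter (adj : ∀ i, V i → V i → Prop) (h : ∀ i, V i → ℤ) (q : ℕ) (hq : q ≠ 0)
    (i0 i1 : Fin d) (hne : i0 ≠ i1)
    (hadjsymm : ∀ i (a b : V i), adj i a b ↔ adj i b a)
    (hdown : ∀ i (v : V i), Nat.card {w : V i // adj i v w ∧ h i w = h i v - 1} = q)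
    (hup : ∀ i (v : V i), Nat.card {w : V i // adj i v w ∧ h i w = h i v + 1} = 1) (y : DLvert V h) (r : ℕ) :
    h i0 (((Tv adj h q hq i0 i1 hne hadjsymm hdown hup)^[r] y).1 i0) = h i0 (y.1 i0) + r := by
  induction r with
  | zero => simp
  | succ n ih =>
    rw [Function.iterate_succ_apply', h_Tv adj h q hq i0 i1 hne hadjsymm hdown hup, ih]
    push_cast
    ring

lemma Tv_iter_Sv_iter (adj : ∀ i, V i → V i → Prop) (h : ∀ i, V i → ℤ) (q : ℕ) (hq : q ≠ 0)
    (i0 i1 : Fin d) (hne : i0 ≠ i1)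
    (hadjsymm : ∀ i (a b : V i), adj i a b ↔ adj i b a)
    (hdown : ∀ i (v : V i), Nat.card {w : V i // adj i v w ∧ h i w = h i v - 1} = q)
    (hup : ∀ i (v : V i), Nat.card {w : V i // adj i v w ∧ h i w = h i v + 1} = 1) (r : ℕ) : ∀ x : DLvert V h,
    (Tv adj h q hq i0 i1 hne hadjsymm hdown hup)^[r] ((Sv adj h q hq i0 i1 hne hadjsymm hdown hup)^[r] x) = x := by
  induction r with
  | zero => intro x; simp
  | succ n ih =>
    intro x
    rw [Function.iterate_succ_apply', Function.iterate_succ_apply, ih (Sv adj h q hq i0 i1 hne hadjsymm hdown hup x),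
      Tv_Sv adj h q hq i0 i1 hne hadjsymm hdown hup]

lemma Sv_iter_Tv_iter (adj : ∀ i, V i → V i → Prop) (h : ∀ i, V i → ℤ) (q : ℕ) (hq : q ≠ 0)
    (i0 i1 : Fin d) (hne : i0 ≠ i1)
    (hadjsymm : ∀ i (a b : V i), adj i a b ↔ adj i b a)
    (hdown : ∀ i (v : V i), Nat.card {w : V i // adj i v w ∧ h i w = h i v - 1} = q)
    (hup : ∀ i (v : V i), Nat.card {w : V i // adj i v w ∧ h i w = h i v + 1} = 1) (r : ℕ) : ∀ y : DLvert V h,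
    (Sv adj h q hq i0 i1 hne hadjsymm hdown hup)^[r] ((Tv adj h q hq i0 i1 hne hadjsymm hdown hup)^[r] y) = y := by
  induction r with
  | zero => intro y; simp
  | succ n ih =>
    intro y
    rw [Function.iterate_succ_apply', Function.iterate_succ_apply, ih (Tv adj h q hq i0 i1 hne hadjsymm hdown hup y),
      Sv_Tv adj h q hq i0 i1 hne hadjsymm hdown hup]

/-- The `k`-to-1 retraction onto the multiples-of-`k` levels. -/
noncomputable def ufun (adj : ∀ i, V i → V i → Prop) (h : ∀ i, V i → ℤ) (q : ℕ) (hq : q ≠ 0)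
    (i0 i1 : Fin d) (hne : i0 ≠ i1)
    (hadjsymm : ∀ i (a b : V i), adj i a b ↔ adj i b a)
    (hdown : ∀ i (v : V i), Nat.card {w : V i // adj i v w ∧ h i w = h i v - 1} = q)
    (hup : ∀ i (v : V i), Nat.card {w : V i // adj i v w ∧ h i w = h i v + 1} = 1) (k : ℕ) (x : DLvert V h) : DLvert V h :=
  (Sv adj h q hq i0 i1 hne hadjsymm hdown hup)^[(h i0 (x.1 i0) % (k : ℤ)).toNat] x

lemma h_ufun (adj : ∀ i, V i → V i → Prop) (h : ∀ i, V i → ℤ) (q : ℕ) (hq : q ≠ 0)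
    (i0 i1 : Fin d) (hne : i0 ≠ i1)
    (hadjsymm : ∀ i (a b : V i), adj i a b ↔ adj i b a)
    (hdown : ∀ i (v : V i), Nat.card {w : V i // adj i v w ∧ h i w = h i v - 1} = q)
    (hup : ∀ i (v : V i), Nat.card {w : V i // adj i v w ∧ h i w = h i v + 1} = 1) (k : ℕ) (hk : k ≠ 0) (x : DLvert V h) :
    h i0 ((ufun adj h q hq i0 i1 hne hadjsymm hdown hup k x).1 i0) = h i0 (x.1 i0) - h i0 (x.1 i0) % (k : ℤ) := by
  rw [ufun, h_Sv_iter adj h q hq i0 i1 hne hadjsymm hdown hup]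
  rw [Int.toNat_of_nonneg (Int.emod_nonneg _ (by exact_mod_cast hk))]

lemma ufun_dvd (adj : ∀ i, V i → V i → Prop) (h : ∀ i, V i → ℤ) (q : ℕ) (hq : q ≠ 0)
    (i0 i1 : Fin d) (hne : i0 ≠ i1)
    (hadjsymm : ∀ i (a b : V i), adj i a b ↔ adj i b a)
    (hdown : ∀ i (v : V i), Nat.card {w : V i // adj i v w ∧ h i w = h i v - 1} = q)
    (hup : ∀ i (v : V i), Nat.card {w : V i // adj i v w ∧ h i w = h i v + 1} = 1) (k : ℕ) (hk : k ≠ 0) (x : DLvert V h) :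
    (k : ℤ) ∣ h i0 ((ufun adj h q hq i0 i1 hne hadjsymm hdown hup k x).1 i0) := by
  rw [h_ufun adj h q hq i0 i1 hne hadjsymm hdown hup k hk x]
  exact ⟨h i0 (x.1 i0) / (k : ℤ), by rw [Int.emod_def]; ring⟩

lemma ufun_id (adj : ∀ i, V i → V i → Prop) (h : ∀ i, V i → ℤ) (q : ℕ) (hq : q ≠ 0)
    (i0 i1 : Fin d) (hne : i0 ≠ i1)
    (hadjsymm : ∀ i (a b : V i), adj i a b ↔ adj i b a)
    (hdown : ∀ i (v : V i), Nat.card {w : V i // adj i v w ∧ h i w = h i v - 1} = q)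
    (hup : ∀ i (v : V i), Nat.card {w : V i // adj i v w ∧ h i w = h i v + 1} = 1) (k : ℕ) {x : DLvert V h}
    (hdvd : (k : ℤ) ∣ h i0 (x.1 i0)) : ufun adj h q hq i0 i1 hne hadjsymm hdown hup k x = x := by
  rw [ufun, Int.emod_eq_zero_of_dvd hdvd]
  simp

lemma ufun_Tv_iter (adj : ∀ i, V i → V i → Prop) (h : ∀ i, V i → ℤ) (q : ℕ) (hq : q ≠ 0)
    (i0 i1 : Fin d) (hne : i0 ≠ i1)
    (hadjsymm : ∀ i (a b : V i), adj i a b ↔ adj i b a)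
    (hdown : ∀ i (v : V i), Nat.card {w : V i // adj i v w ∧ h i w = h i v - 1} = q)
    (hup : ∀ i (v : V i), Nat.card {w : V i // adj i v w ∧ h i w = h i v + 1} = 1) (k : ℕ) {y : DLvert V h}
    (hdvd : (k : ℤ) ∣ h i0 (y.1 i0)) {r : ℕ} (hr : r < k) :
    ufun adj h q hq i0 i1 hne hadjsymm hdown hup k ((Tv adj h q hq i0 i1 hne hadjsymm hdown hup)^[r] y) = y := by
  have h1 : h i0 (((Tv adj h q hq i0 i1 hne hadjsymm hdown hup)^[r] y).1 i0) % (k : ℤ) = r := by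
    rw [h_Tv_iter adj h q hq i0 i1 hne hadjsymm hdown hup]
    obtain ⟨c, hc⟩ := hdvd
    rw [hc]
    rw [add_comm, Int.add_mul_emod_self_left]
    exact Int.emod_eq_of_lt (by positivity) (by exact_mod_cast hr)
  rw [ufun, h1]
  simp only [Int.toNat_natCast]
  exact Sv_iter_Tv_iter adj h q hq i0 i1 hne hadjsymm hdown hup r y

lemma ufun_fiber (adj : ∀ i, V i → V i → Prop) (h : ∀ i, V i → ℤ) (q : ℕ) (hq : q ≠ 0)
    (i0 i1 : Fin d) (hne : i0 ≠ i1)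
    (hadjsymm : ∀ i (a b : V i), adj i a b ↔ adj i b a)
    (hdown : ∀ i (v : V i), Nat.card {w : V i // adj i v w ∧ h i w = h i v - 1} = q)
    (hup : ∀ i (v : V i), Nat.card {w : V i // adj i v w ∧ h i w = h i v + 1} = 1) (k : ℕ) (hk : k ≠ 0) {x : DLvert V h} {y : DLvert V h}
    (hxy : ufun adj h q hq i0 i1 hne hadjsymm hdown hup k x = y) :
    x = (Tv adj h q hq i0 i1 hne hadjsymm hdown hup)^[(h i0 (x.1 i0) % (k : ℤ)).toNat] y := by
  rw [← hxy, ufun, Tv_iter_Sv_iter adj h q hq i0 i1 hne hadjsymm hdown hup]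

lemma dist_ufun (adj : ∀ i, V i → V i → Prop) (h : ∀ i, V i → ℤ) (q : ℕ) (hq : q ≠ 0)
    (i0 i1 : Fin d) (hne : i0 ≠ i1)
    (hadjsymm : ∀ i (a b : V i), adj i a b ↔ adj i b a)
    (hdown : ∀ i (v : V i), Nat.card {w : V i // adj i v w ∧ h i w = h i v - 1} = q)
    (hup : ∀ i (v : V i), Nat.card {w : V i // adj i v w ∧ h i w = h i v + 1} = 1) (k : ℕ) (hk : k ≠ 0) (x : DLvert V h) :
    DLdist adj h x (ufun adj h q hq i0 i1 hne hadjsymm hdown hup k x) ≤ k := by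
  have hrk : (h i0 (x.1 i0) % (k : ℤ)).toNat ≤ k := by
    have h1 : h i0 (x.1 i0) % (k : ℤ) < (k : ℤ) :=
      Int.emod_lt_of_pos _ (by positivity)
    omega
  refine le_trans (gdist_le (DLedge adj h) (fun t => (Sv adj h q hq i0 i1 hne hadjsymm hdown hup)^[t] x) rfl rfl ?_) hrk
  intro m _
  rw [Function.iterate_succ_apply']
  exact edge_Sv adj h q hq i0 i1 hne hadjsymm hdown hup ((Sv adj h q hq i0 i1 hne hadjsymm hdown hup)^[m] x)

lemma DLedge_symm {adj : ∀ i, V i → V i → Prop} {h : ∀ i, V i → ℤ}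
    (hadjsymm : ∀ i (a b : V i), adj i a b ↔ adj i b a) {x y : DLvert V h}
    (e : DLedge adj h x y) : DLedge adj h y x := by
  obtain ⟨i, j, hij, h1, h2, h3⟩ := e
  exact ⟨i, j, hij, (hadjsymm i _ _).1 h1, (hadjsymm j _ _).1 h2,
    fun l l1 l2 => (h3 l l1 l2).symm⟩

end DLaux

/-- There is a `k`-to-1 map `u : DL_d(q) → i(DL_d^k(q))` at bounded distance from the identity,
where `i(DL_d^k(q))` is the set of vertices whose first-tree height lies in `kℤ`.  Consequently,
any bijective `(K,C)`-quasi-isometry `φ : DL_d^k(q) → DL_d(q)` yields a quasi-isometry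
`Φ = u ∘ φ : DL_d^k(q) → DL_d^k(q)` with `|Φ⁻¹(v)| = k` for every vertex `v`. -/
theorem DL_k_to_one_map (q d k : ℕ) (hq : 2 ≤ q) (hd : 2 ≤ d) (hk : 1 ≤ k)
    (V : Fin d → Type*) (adj : ∀ i, V i → V i → Prop) (h : ∀ i, V i → ℤ)
    (hadjsymm : ∀ i (a b : V i), adj i a b ↔ adj i b a)
    (hadj : ∀ i (a b : V i), adj i a b → h i b = h i a + 1 ∨ h i b = h i a - 1)
    (hdown : ∀ i (v : V i), Nat.card {w : V i // adj i v w ∧ h i w = h i v - 1} = q)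
    (hup : ∀ i (v : V i), Nat.card {w : V i // adj i v w ∧ h i w = h i v + 1} = 1)
    (hconn : ∀ x y : DLvert V h, ∃ (n : ℕ) (f : ℕ → DLvert V h),
      f 0 = x ∧ f n = y ∧ ∀ m < n, DLedge adj h (f m) (f (m + 1))) :
    ∃ u : DLvert V h → DLvert V h,
    ∃ hu : ∀ x, (k : ℤ) ∣ h ⟨0, by omega⟩ ((u x).1 ⟨0, by omega⟩),
      (Set.range u = {y : DLvert V h | (k : ℤ) ∣ h ⟨0, by omega⟩ (y.1 ⟨0, by omega⟩)}) ∧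
      (∀ y : DLvert V h, (k : ℤ) ∣ h ⟨0, by omega⟩ (y.1 ⟨0, by omega⟩) →
        Nat.card ↥(u ⁻¹' {y}) = k) ∧
      (∃ C : ℕ, ∀ x, DLdist adj h x (u x) ≤ C) ∧
      (∀ (φ : {x : DLvert V h // (k : ℤ) ∣ h ⟨0, by omega⟩ (x.1 ⟨0, by omega⟩)} → DLvert V h)
          (K C : ℝ), 1 ≤ K → 0 ≤ C → Function.Bijective φ →
        (∀ x y, (1 / K) * (DLdist adj h x.1 y.1 : ℝ) - C ≤ (DLdist adj h (φ x) (φ y) : ℝ) ∧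
          (DLdist adj h (φ x) (φ y) : ℝ) ≤ K * (DLdist adj h x.1 y.1 : ℝ) + C) →
        ∃ K' C' : ℝ, 1 ≤ K' ∧ 0 ≤ C' ∧
          (∀ x y, (1 / K') * (DLdist adj h x.1 y.1 : ℝ) - C' ≤
              (DLdist adj h (u (φ x)) (u (φ y)) : ℝ) ∧
            (DLdist adj h (u (φ x)) (u (φ y)) : ℝ) ≤ K' * (DLdist adj h x.1 y.1 : ℝ) + C') ∧
          (∀ z : {x : DLvert V h // (k : ℤ) ∣ h ⟨0, by omega⟩ (x.1 ⟨0, by omega⟩)},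
            ∃ x, (DLdist adj h (u (φ x)) z.1 : ℝ) ≤ C') ∧
          (∀ z : {x : DLvert V h // (k : ℤ) ∣ h ⟨0, by omega⟩ (x.1 ⟨0, by omega⟩)},
            Nat.card ↥{x | u (φ x) = z.1} = k)) := by
  have hq' : q ≠ 0 := by omega
  have hk' : k ≠ 0 := by omega
  have main : ∀ i0 i1 : Fin d, i0 ≠ i1 →
      ∃ u : DLvert V h → DLvert V h,
      ∃ hu : ∀ x, (k : ℤ) ∣ h i0 ((u x).1 i0),
        (Set.range u = {y : DLvert V h | (k : ℤ) ∣ h i0 (y.1 i0)}) ∧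
        (∀ y : DLvert V h, (k : ℤ) ∣ h i0 (y.1 i0) →
          Nat.card ↥(u ⁻¹' {y}) = k) ∧
        (∃ C : ℕ, ∀ x, DLdist adj h x (u x) ≤ C) ∧
        (∀ (φ : {x : DLvert V h // (k : ℤ) ∣ h i0 (x.1 i0)} → DLvert V h)
            (K C : ℝ), 1 ≤ K → 0 ≤ C → Function.Bijective φ →
          (∀ x y, (1 / K) * (DLdist adj h x.1 y.1 : ℝ) - C ≤ (DLdist adj h (φ x) (φ y) : ℝ) ∧
            (DLdist adj h (φ x) (φ y) : ℝ) ≤ K * (DLdist adj h x.1 y.1 : ℝ) + C) →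
          ∃ K' C' : ℝ, 1 ≤ K' ∧ 0 ≤ C' ∧
            (∀ x y, (1 / K') * (DLdist adj h x.1 y.1 : ℝ) - C' ≤
                (DLdist adj h (u (φ x)) (u (φ y)) : ℝ) ∧
              (DLdist adj h (u (φ x)) (u (φ y)) : ℝ) ≤ K' * (DLdist adj h x.1 y.1 : ℝ) + C') ∧
            (∀ z : {x : DLvert V h // (k : ℤ) ∣ h i0 (x.1 i0)},
              ∃ x, (DLdist adj h (u (φ x)) z.1 : ℝ) ≤ C') ∧
            (∀ z : {x : DLvert V h // (k : ℤ) ∣ h i0 (x.1 i0)},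
              Nat.card ↥{x | u (φ x) = z.1} = k)) := by
    intro i0 i1 hne
    have hcardall : ∀ y : DLvert V h, (k : ℤ) ∣ h i0 (y.1 i0) →
        Nat.card ↥((DLaux.ufun adj h q hq' i0 i1 hne hadjsymm hdown hup k) ⁻¹' {y}) = k := by
      intro y hy
      refine Nat.card_eq_of_equiv_fin (Equiv.symm (Equiv.ofBijective
        (fun r : Fin k => (⟨(DLaux.Tv adj h q hq' i0 i1 hne hadjsymm hdown hup)^[r.1] y,
          DLaux.ufun_Tv_iter adj h q hq' i0 i1 hne hadjsymm hdown hup k hy r.2⟩ : ↥((DLaux.ufun adj h q hq' i0 i1 hne hadjsymm hdown hup k) ⁻¹' {y}))) ⟨?_, ?_⟩))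
      · intro a b hab
        have h1 := congrArg (fun z : ↥((DLaux.ufun adj h q hq' i0 i1 hne hadjsymm hdown hup k) ⁻¹' {y}) => h i0 ((z.1).1 i0)) hab
        simp only at h1
        rw [DLaux.h_Tv_iter adj h q hq' i0 i1 hne hadjsymm hdown hup, DLaux.h_Tv_iter adj h q hq' i0 i1 hne hadjsymm hdown hup] at h1
        exact Fin.ext (by omega)
      · rintro ⟨x, hx⟩
        have hx' : DLaux.ufun adj h q hq' i0 i1 hne hadjsymm hdown hup k x = y := hx
        have hr : (h i0 (x.1 i0) % (k : ℤ)).toNat < k := by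
          have h1 : h i0 (x.1 i0) % (k : ℤ) < (k : ℤ) :=
            Int.emod_lt_of_pos _ (by positivity)
          have h2 : (0 : ℤ) ≤ h i0 (x.1 i0) % (k : ℤ) :=
            Int.emod_nonneg _ (by exact_mod_cast hk')
          omega
        refine ⟨⟨(h i0 (x.1 i0) % (k : ℤ)).toNat, hr⟩, ?_⟩
        exact Subtype.ext (DLaux.ufun_fiber adj h q hq' i0 i1 hne hadjsymm hdown hup k hk' hx').symm
    refine ⟨DLaux.ufun adj h q hq' i0 i1 hne hadjsymm hdown hup k, fun x => DLaux.ufun_dvd adj h q hq' i0 i1 hne hadjsymm hdown hup k hk' x, ?_, hcardall,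
      ⟨k, fun x => DLaux.dist_ufun adj h q hq' i0 i1 hne hadjsymm hdown hup k hk' x⟩, ?_⟩
    · ext y
      simp only [Set.mem_range, Set.mem_setOf_eq]
      constructor
      · rintro ⟨x, rfl⟩
        exact DLaux.ufun_dvd adj h q hq' i0 i1 hne hadjsymm hdown hup k hk' x
      · intro hy
        exact ⟨y, DLaux.ufun_id adj h q hq' i0 i1 hne hadjsymm hdown hup k hy⟩
    · intro φ K C hK hC hbij hqi
      have dsym : ∀ a b : DLvert V h, DLdist adj h a b = DLdist adj h b a := fun a b =>
        le_antisymm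
          (gdist_symm_le _ (fun _ _ e => DLaux.DLedge_symm hadjsymm e) (hconn b a))
          (gdist_symm_le _ (fun _ _ e => DLaux.DLedge_symm hadjsymm e) (hconn a b))
      have dtri : ∀ a b c : DLvert V h,
          DLdist adj h a c ≤ DLdist adj h a b + DLdist adj h b c :=
        fun a b c => gdist_triangle' _ (hconn a b) (hconn b c)
      have near : ∀ a : DLvert V h, DLdist adj h a (DLaux.ufun adj h q hq' i0 i1 hne hadjsymm hdown hup k a) ≤ k :=
        fun a => DLaux.dist_ufun adj h q hq' i0 i1 hne hadjsymm hdown hup k hk' a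
      have h2k : (0 : ℝ) ≤ 2 * (k : ℝ) := by positivity
      refine ⟨K, C + 2 * k, hK, by linarith, ?_, ?_, ?_⟩
      · intro x y
        obtain ⟨hl, hr⟩ := hqi x y
        have hub : DLdist adj h (DLaux.ufun adj h q hq' i0 i1 hne hadjsymm hdown hup k (φ x)) (DLaux.ufun adj h q hq' i0 i1 hne hadjsymm hdown hup k (φ y)) ≤
            DLdist adj h (φ x) (φ y) + 2 * k := by
          have t1 := dtri (DLaux.ufun adj h q hq' i0 i1 hne hadjsymm hdown hup k (φ x)) (φ x) (DLaux.ufun adj h q hq' i0 i1 hne hadjsymm hdown hup k (φ y))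
          have t2 := dtri (φ x) (φ y) (DLaux.ufun adj h q hq' i0 i1 hne hadjsymm hdown hup k (φ y))
          have t3 := near (φ x)
          have t4 := near (φ y)
          have t5 := dsym (φ x) (DLaux.ufun adj h q hq' i0 i1 hne hadjsymm hdown hup k (φ x))
          omega
        have hlb : DLdist adj h (φ x) (φ y) ≤
            DLdist adj h (DLaux.ufun adj h q hq' i0 i1 hne hadjsymm hdown hup k (φ x)) (DLaux.ufun adj h q hq' i0 i1 hne hadjsymm hdown hup k (φ y)) + 2 * k := by
          have t1 := dtri (φ x) (DLaux.ufun adj h q hq' i0 i1 hne hadjsymm hdown hup k (φ x)) (φ y)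
          have t2 := dtri (DLaux.ufun adj h q hq' i0 i1 hne hadjsymm hdown hup k (φ x)) (DLaux.ufun adj h q hq' i0 i1 hne hadjsymm hdown hup k (φ y)) (φ y)
          have t3 := near (φ x)
          have t4 := near (φ y)
          have t5 := dsym (DLaux.ufun adj h q hq' i0 i1 hne hadjsymm hdown hup k (φ y)) (φ y)
          omega
        have hubR : (DLdist adj h (DLaux.ufun adj h q hq' i0 i1 hne hadjsymm hdown hup k (φ x)) (DLaux.ufun adj h q hq' i0 i1 hne hadjsymm hdown hup k (φ y)) : ℝ) ≤
            (DLdist adj h (φ x) (φ y) : ℝ) + 2 * k := by exact_mod_cast hub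
        have hlbR : (DLdist adj h (φ x) (φ y) : ℝ) ≤
            (DLdist adj h (DLaux.ufun adj h q hq' i0 i1 hne hadjsymm hdown hup k (φ x)) (DLaux.ufun adj h q hq' i0 i1 hne hadjsymm hdown hup k (φ y)) : ℝ) + 2 * k := by exact_mod_cast hlb
        constructor
        · linarith
        · linarith
      · intro z
        obtain ⟨x, hx⟩ := hbij.2 z.1
        refine ⟨x, ?_⟩
        have h0 : DLdist adj h z.1 z.1 = 0 := gdist_self' (DLedge adj h) z.1
        rw [hx, DLaux.ufun_id adj h q hq' i0 i1 hne hadjsymm hdown hup k z.2, h0]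
        push_cast
        linarith
      · intro z
        rw [Nat.card_congr (Equiv.ofBijective
          (fun a : ↥{x | DLaux.ufun adj h q hq' i0 i1 hne hadjsymm hdown hup k (φ x) = z.1} => (⟨φ a.1, a.2⟩ : ↥((DLaux.ufun adj h q hq' i0 i1 hne hadjsymm hdown hup k) ⁻¹' {z.1})))
          ⟨?_, ?_⟩)]
        · exact hcardall z.1 z.2
        · intro a b hab
          exact Subtype.ext (hbij.1 (congrArg Subtype.val hab))
        · rintro ⟨w, hw⟩
          obtain ⟨x, hx⟩ := hbij.2 w
          exact ⟨⟨x, show DLaux.ufun adj h q hq' i0 i1 hne hadjsymm hdown hup k (φ x) = z.1 by rw [hx]; exact hw⟩, Subtype.ext hx⟩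
  exact main ⟨0, by omega⟩ ⟨1, by omega⟩ (Fin.ne_of_val_ne (by norm_num))
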